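/- For all closed terms P, Q, R ∈ S_A, EqFSCL ⊢ (P ∨❛ Q) ∧❛ (R ∧❛ F) = (¬P ∨❛ (R ∧❛ F)) ∧❛ (Q ∧❛ (R ∧❛ F)). -/
import Mathlib


/-- Closed sequential propositional statements over `A`:
`P ::= a | T | F | ¬P | P ∧❛ P | P ∨❛ P`. -/
inductive STerm (A : Type) : Type
  | atom : A → STerm A
  | tt : STerm A
  | ff : STerm A
  | neg : STerm A → STerm A
  | and : STerm A → STerm A → STerm A
  | or : STerm A → STerm A → STerm A

/-- Derivability from the axiom set EqFSCL: the least congruence (w.r.t. `¬`, `∧❛`, `∨❛`)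
on closed terms containing all closed substitution instances of the axioms (F1)-(F10). -/
inductive EqFSCL {A : Type} : STerm A → STerm A → Prop
  | refl (P) : EqFSCL P P
  | symm {P Q} : EqFSCL P Q → EqFSCL Q P
  | trans {P Q R} : EqFSCL P Q → EqFSCL Q R → EqFSCL P R
  | neg_congr {P Q} : EqFSCL P Q → EqFSCL (.neg P) (.neg Q)
  | and_congr {P P' Q Q'} : EqFSCL P Q → EqFSCL P' Q' → EqFSCL (.and P P') (.and Q Q')
  | or_congr {P P' Q Q'} : EqFSCL P Q → EqFSCL P' Q' → EqFSCL (.or P P') (.or Q Q')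
  | F1 : EqFSCL .ff (.neg .tt)
  | F2 (x y) : EqFSCL (.or x y) (.neg (.and (.neg x) (.neg y)))
  | F3 (x) : EqFSCL (.neg (.neg x)) x
  | F4 (x) : EqFSCL (.and .tt x) x
  | F5 (x) : EqFSCL (.or x .ff) x
  | F6 (x) : EqFSCL (.and .ff x) .ff
  | F7 (x y z) : EqFSCL (.and (.and x y) z) (.and x (.and y z))
  | F8 (x) : EqFSCL (.and (.neg x) .ff) (.and x .ff)
  | F9 (x y) : EqFSCL (.or (.and x .ff) y) (.and (.or x .tt) y)
  | F10 (x y z) : EqFSCL (.or (.and x y) (.and z .ff))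
      (.and (.or x (.and z .ff)) (.or y (.and z .ff)))

namespace EqFSCL

/-- ¬(x ∧ y) = ¬x ∨ ¬y -/
theorem nand {A : Type} (x y : STerm A) :
    EqFSCL (.neg (.and x y)) (.or (.neg x) (.neg y)) := by
  refine .symm (.trans (.F2 _ _) (.neg_congr (.and_congr (.F3 x) (.F3 y))))

/-- ¬(x ∨ y) = ¬x ∧ ¬y -/
theorem nor {A : Type} (x y : STerm A) :
    EqFSCL (.neg (.or x y)) (.and (.neg x) (.neg y)) := by
  exact .trans (.neg_congr (.F2 x y)) (.F3 _)

/-- x ∨ T = ¬(x ∧ F) -/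
theorem orT {A : Type} (x : STerm A) :
    EqFSCL (.or x .tt) (.neg (.and x .ff)) := by
  refine .trans (.F2 x .tt) (.neg_congr ?_)
  exact .trans (.and_congr (.refl _) (.symm .F1)) (.F8 x)

/-- z ∧ F = (z ∨ T) ∧ F -/
theorem zF {A : Type} (z : STerm A) :
    EqFSCL (.and z .ff) (.and (.or z .tt) .ff) := by
  exact .trans (.symm (.F5 _)) (.F9 z .ff)

/-- dual of F10: (x∨y) ∧ ¬(z∧F) = (x ∧ ¬(z∧F)) ∨ (y ∧ ¬(z∧F)) -/
theorem dualF10 {A : Type} (x y z : STerm A) :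
    EqFSCL (.and (.or x y) (.neg (.and z .ff)))
      (.or (.and x (.neg (.and z .ff))) (.and y (.neg (.and z .ff)))) := by
  refine .trans (.symm (.F3 _)) ?_
  refine .trans (.neg_congr (nand _ _)) ?_
  refine .trans (.neg_congr (.or_congr (nor x y) (.F3 _))) ?_
  refine .trans (.neg_congr (.F10 (.neg x) (.neg y) z)) ?_
  refine .trans (nand _ _) (.or_congr ?_ ?_) <;>
    exact .trans (nor _ _) (.and_congr (.F3 _) (.refl _))

/-- (a ∨ b) ∧ F = ¬a ∧ (b ∧ F) -/
theorem orF {A : Type} (a b : STerm A) :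
    EqFSCL (.and (.or a b) .ff) (.and (.neg a) (.and b .ff)) := by
  refine .trans (.symm (.F8 (.or a b))) ?_
  refine .trans (.and_congr (nor a b) (.refl _)) ?_
  refine .trans (.F7 _ _ _) (.and_congr (.refl _) (.F8 b))

end EqFSCL

/-- `EqFSCL ⊢ (P ∨❛ Q) ∧❛ (R ∧❛ F) = (¬P ∨❛ (R ∧❛ F)) ∧❛ (Q ∧❛ (R ∧❛ F))`. -/
theorem eqFSCL_seqs {A : Type} [Nonempty A] (P Q R : STerm A) :
    EqFSCL (.and (.or P Q) (.and R .ff))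
      (.and (.or (.neg P) (.and R .ff)) (.and Q (.and R .ff))) := by
  refine .trans (.and_congr (.refl _) (EqFSCL.zF R)) ?_
  refine .trans (.symm (.F7 _ _ _)) ?_
  refine .trans (.and_congr (.and_congr (.refl _) (EqFSCL.orT R)) (.refl _)) ?_
  refine .trans (.and_congr (EqFSCL.dualF10 P Q R) (.refl _)) ?_
  refine .trans (EqFSCL.orF _ _) ?_
  refine .and_congr ?_ ?_
  · -- ¬(P ∧ ¬(R∧F)) = ¬P ∨ (R∧F)
    refine .symm (.trans (.F2 _ _) (.neg_congr (.and_congr (.F3 P) (.refl _))))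
  · -- (Q ∧ ¬(R∧F)) ∧ F = Q ∧ (R ∧ F)
    refine .trans (.and_congr (.and_congr (.refl _) (.symm (EqFSCL.orT R))) (.refl _)) ?_
    refine .trans (.F7 _ _ _) (.and_congr (.refl _) (.symm (EqFSCL.zF R)))
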